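/- For ε ∈ (0,1) and ξ ∈ ℝ^n with ε-norm ν = ‖ξ‖_ε, the decomposition ξ = S_{(1-ε)ν}(ξ) + (ξ - S_{(1-ε)ν}(ξ)) satisfies ‖S_{(1-ε)ν}(ξ)‖₂ = εν and ‖ξ - S_{(1-ε)ν}(ξ)‖_∞ ≤ (1-ε)ν, and this is the unique decomposition ξ = x + y with ‖x‖₂ ≤ εν and ‖y‖_∞ ≤ (1-ε)ν. -/

import Mathlib

/-- Soft-thresholding: `S_β(ξ)_i = sign(ξ_i) · max(|ξ_i| - β, 0)`. -/
noncomputable def softThreshold (n : ℕ) (β : ℝ) (ξ : EuclideanSpace ℝ (Fin n)) :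
    EuclideanSpace ℝ (Fin n) := WithLp.toLp 2 (fun i => Real.sign (ξ i) * max (|ξ i| - β) 0)

theorem stmt_4 (n : ℕ) (ε : ℝ) (hε : ε ∈ Set.Ioo (0:ℝ) 1)
    (ξ : EuclideanSpace ℝ (Fin n)) (ν : ℝ) (hν : 0 < ν)
    (hdef : ∑ i, (max (|ξ i| - (1 - ε) * ν) 0) ^ 2 = (ε * ν) ^ 2) :
    ‖softThreshold n ((1 - ε) * ν) ξ‖ = ε * ν ∧
    (∀ i, |(ξ - softThreshold n ((1 - ε) * ν) ξ) i| ≤ (1 - ε) * ν) ∧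
    (∀ x y : EuclideanSpace ℝ (Fin n),
      ξ = x + y → ‖x‖ ≤ ε * ν → (∀ i, |y i| ≤ (1 - ε) * ν) →
        x = softThreshold n ((1 - ε) * ν) ξ ∧
        y = ξ - softThreshold n ((1 - ε) * ν) ξ) := by
  obtain ⟨hε0, hε1⟩ := hε
  set β := (1 - ε) * ν with hβdef
  have hβpos : 0 < β := mul_pos (by linarith) hν
  have hεν : 0 < ε * ν := mul_pos hε0 hν
  set s := softThreshold n β ξ with hs
  have hsi : ∀ i, s i = Real.sign (ξ i) * max (|ξ i| - β) 0 := fun i => rfl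
  have habs : ∀ i, |s i| = max (|ξ i| - β) 0 := by
    intro i
    rw [hsi i, abs_mul, abs_of_nonneg (le_max_right (|ξ i| - β) 0)]
    by_cases h : ξ i = 0
    · rw [h, Real.sign_zero, abs_zero, zero_mul]
      exact (max_eq_right (by linarith)).symm
    · rcases Ne.lt_or_gt h with h | h
      · rw [Real.sign_of_neg h]; norm_num
      · rw [Real.sign_of_pos h]; norm_num
  have hres : ∀ i, |ξ i - s i| ≤ β := by
    intro i
    by_cases h : |ξ i| ≤ β
    · have hm : max (|ξ i| - β) 0 = 0 := max_eq_right (by linarith)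
      rw [hsi i, hm, mul_zero, sub_zero]; exact h
    · push_neg at h
      have hm : max (|ξ i| - β) 0 = |ξ i| - β := max_eq_left (by linarith)
      have hne : ξ i ≠ 0 := by
        intro h0; rw [h0, abs_zero] at h; linarith
      rcases hne.lt_or_gt with hlt | hlt
      · have hsv : s i = -(|ξ i| - β) := by
          rw [hsi i, hm, Real.sign_of_neg hlt, neg_one_mul]
        rw [hsv, abs_of_neg hlt]
        have hv : ξ i - -(-ξ i - β) = -β := by ring
        rw [hv, abs_neg, abs_of_pos hβpos]
      · have hsv : s i = |ξ i| - β := by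
          rw [hsi i, hm, Real.sign_of_pos hlt, one_mul]
        rw [hsv, abs_of_pos hlt]
        have hv : ξ i - (ξ i - β) = β := by ring
        rw [hv, abs_of_pos hβpos]
  have hs2 : ∑ i, (s i) ^ 2 = (ε * ν) ^ 2 := by
    rw [← hdef]
    exact Finset.sum_congr rfl fun i _ => by rw [← sq_abs, habs i]
  have hnorm : ‖s‖ = ε * ν := by
    rw [EuclideanSpace.norm_eq]
    have h1 : ∑ i, ‖s i‖ ^ 2 = (ε * ν) ^ 2 := by
      rw [← hs2]
      exact Finset.sum_congr rfl fun i _ => by rw [Real.norm_eq_abs, sq_abs]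
    rw [h1, Real.sqrt_sq hεν.le]
  refine ⟨hnorm, fun i => hres i, ?_⟩
  intro x y hxy hx hy
  have hxyi : ∀ i, x i = ξ i - y i := by
    intro i
    have h : ξ i = x i + y i := by rw [hxy]; rfl
    linarith
  have hterm : ∀ i, 0 ≤ (x i - s i) * s i := by
    intro i
    by_cases h : |ξ i| ≤ β
    · have hm : max (|ξ i| - β) 0 = 0 := max_eq_right (by linarith)
      rw [hsi i, hm, mul_zero, mul_zero]
    · push_neg at h
      have hm : max (|ξ i| - β) 0 = |ξ i| - β := max_eq_left (by linarith)
      have hyb := abs_le.mp (hy i)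
      have hne : ξ i ≠ 0 := by
        intro h0; rw [h0, abs_zero] at h; linarith
      rcases hne.lt_or_gt with hlt | hlt
      · have hsv : s i = -(|ξ i| - β) := by
          rw [hsi i, hm, Real.sign_of_neg hlt, neg_one_mul]
        have hxv : x i - s i = -y i - β := by
          rw [hxyi i, hsv, abs_of_neg hlt]; ring
        rw [hxv, hsv]
        nlinarith [hyb.1, hyb.2]
      · have hsv : s i = |ξ i| - β := by
          rw [hsi i, hm, Real.sign_of_pos hlt, one_mul]
        have hxv : x i - s i = β - y i := by
          rw [hxyi i, hsv, abs_of_pos hlt]; ring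
        rw [hxv, hsv]
        nlinarith [hyb.1, hyb.2]
  have hx2 : ∑ i, (x i) ^ 2 ≤ (ε * ν) ^ 2 := by
    have h1 : ∑ i, (x i) ^ 2 = ‖x‖ ^ 2 := by
      rw [EuclideanSpace.norm_eq,
        Real.sq_sqrt (Finset.sum_nonneg fun i _ => sq_nonneg _)]
      exact Finset.sum_congr rfl fun i _ => by rw [Real.norm_eq_abs, sq_abs]
    rw [h1]
    exact pow_le_pow_left₀ (norm_nonneg x) hx 2
  have hexp : ∑ i, (x i) ^ 2 =
      ∑ i, (s i) ^ 2 + (2 * ∑ i, (x i - s i) * s i + ∑ i, (x i - s i) ^ 2) := by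
    rw [Finset.mul_sum, ← Finset.sum_add_distrib, ← Finset.sum_add_distrib]
    exact Finset.sum_congr rfl fun i _ => by ring
  have hcross : 0 ≤ ∑ i, (x i - s i) * s i := Finset.sum_nonneg fun i _ => hterm i
  have hd2 : ∑ i, (x i - s i) ^ 2 ≤ 0 := by linarith [hx2, hs2, hexp, hcross]
  have hzero : ∀ i ∈ Finset.univ, (x i - s i) ^ 2 = 0 :=
    (Finset.sum_eq_zero_iff_of_nonneg (fun i _ => sq_nonneg _)).mp
      (le_antisymm hd2 (Finset.sum_nonneg fun i _ => sq_nonneg _))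
  have hxs : x = s := by
    ext i
    have h := hzero i (Finset.mem_univ i)
    have : x i - s i = 0 := by
      exact pow_eq_zero_iff (by norm_num) |>.mp h
    linarith
  refine ⟨hxs, ?_⟩
  have : y = ξ - x := by rw [hxy]; abel
  rw [this, hxs]
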